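/- Let X and Y be locally solid vector lattices with Y order complete and having the Fatou property. If 0 ≤ T ≤ S are linear operators from X to Y and S is continuous (respectively nb-bounded, respectively bb-bounded), then T is continuous (respectively nb-bounded, respectively bb-bounded). -/

import Mathlib

open Filter Topology Bornology Set
open scoped Pointwise

/-- A solid subset of a lattice-ordered group. -/
def SolidSet {X : Type*} [Lattice X] [AddCommGroup X] (s : Set X) : Prop :=
  ∀ x y : X, |x| ≤ |y| → y ∈ s → x ∈ s

/-- The set of all finite suprema of elements of `A`. -/
def FinSups {X : Type*} [Lattice X] (A : Set X) : Set X :=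
  {x | ∃ a ∈ A, ∃ l : List X, (∀ b ∈ l, b ∈ A) ∧ x = l.foldr (· ⊔ ·) a}

/-- A locally solid topology: a basis at zero of solid sets. -/
def IsLocallySolid (X : Type*) [Lattice X] [AddCommGroup X] [TopologicalSpace X] : Prop :=
  ∀ U ∈ 𝓝 (0 : X), ∃ V ∈ 𝓝 (0 : X), SolidSet V ∧ V ⊆ U

/-- AM-property: finite suprema of topologically bounded sets are topologically bounded. -/
def HasAMProperty (X : Type*) [Lattice X] [AddCommGroup X] [Module ℝ X]
    [TopologicalSpace X] : Prop :=
  ∀ B : Set X, IsVonNBounded ℝ B → IsVonNBounded ℝ (FinSups B)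

/-- Levi property: bounded upward directed sets of positive elements have suprema. -/
def HasLeviProperty (X : Type*) [Lattice X] [AddCommGroup X] [Module ℝ X]
    [TopologicalSpace X] : Prop :=
  ∀ D : Set X, D.Nonempty → DirectedOn (· ≤ ·) D → (∀ x ∈ D, 0 ≤ x) →
    IsVonNBounded ℝ D → ∃ y, IsLUB D y

/-- Lebesgue property: nets decreasing to `0` converge to `0` topologically. -/
def HasLebesgueProperty (X : Type*) [Lattice X] [AddCommGroup X]
    [TopologicalSpace X] : Prop :=
  ∀ {ι : Type} [Nonempty ι] [SemilatticeSup ι] (u : ι → X),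
    Antitone u → IsGLB (Set.range u) 0 → Tendsto u atTop (𝓝 0)

/-- Order (Dedekind) completeness. -/
def OrderComplete (X : Type*) [Lattice X] : Prop :=
  ∀ A : Set X, A.Nonempty → BddAbove A → ∃ y, IsLUB A y

/-- A set is order closed if it contains suprema of its upward directed subsets. -/
def OrderClosedSet {X : Type*} [Lattice X] (s : Set X) : Prop :=
  ∀ A : Set X, A ⊆ s → DirectedOn (· ≤ ·) A → ∀ y, IsLUB A y → y ∈ s

/-- Fatou property: a basis at zero of solid order closed sets. -/
def HasFatouProperty (X : Type*) [Lattice X] [AddCommGroup X] [TopologicalSpace X] : Prop :=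
  ∀ U ∈ 𝓝 (0 : X), ∃ V ∈ 𝓝 (0 : X), SolidSet V ∧ OrderClosedSet V ∧ V ⊆ U

variable {X Y : Type*} [Lattice X] [AddCommGroup X] [Module ℝ X] [TopologicalSpace X]
  [Lattice Y] [AddCommGroup Y] [Module ℝ Y] [TopologicalSpace Y]

/-- An order bounded operator maps order bounded sets to order bounded sets. -/
def OrderBoundedOp (T : X →ₗ[ℝ] Y) : Prop :=
  ∀ A : Set X, BddBelow A → BddAbove A → BddBelow (T '' A) ∧ BddAbove (T '' A)

/-- nb-bounded: maps some zero neighborhood to a topologically bounded set. -/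
def NbBoundedOp (T : X →ₗ[ℝ] Y) : Prop :=
  ∃ U ∈ 𝓝 (0 : X), IsVonNBounded ℝ (T '' U)

/-- bb-bounded: maps topologically bounded sets to topologically bounded sets. -/
def BbBoundedOp (T : X →ₗ[ℝ] Y) : Prop :=
  ∀ B : Set X, IsVonNBounded ℝ B → IsVonNBounded ℝ (T '' B)

/-- `M` is the modulus of `S` (Riesz–Kantorovich formula). -/
def IsModulusOf (S M : X →ₗ[ℝ] Y) : Prop :=
  ∀ x : X, 0 ≤ x → IsLUB {y : Y | ∃ u : X, |u| ≤ x ∧ y = |S u|} (M x)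

/-- The order on operators: `T ≤ S` pointwise on the positive cone. -/
def OpLE (T S : X →ₗ[ℝ] Y) : Prop := ∀ x : X, 0 ≤ x → T x ≤ S x

section Operators

variable {V W : Type*} [Lattice V] [AddCommGroup V]
  [CovariantClass V V (· + ·) (· ≤ ·)] [Module ℝ V]
  [TopologicalSpace V] [IsTopologicalAddGroup V] [ContinuousSMul ℝ V]
  [Lattice W] [AddCommGroup W]
  [CovariantClass W W (· + ·) (· ≤ ·)] [Module ℝ W]
  [TopologicalSpace W] [IsTopologicalAddGroup W] [ContinuousSMul ℝ W]

section AuxLemmas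

variable {E : Type*} [Lattice E] [AddCommGroup E] [CovariantClass E E (· + ·) (· ≤ ·)]

lemma aux_add_le_add_right' {a b : E} (h : a ≤ b) (c : E) : a + c ≤ b + c := by
  rw [add_comm a c, add_comm b c]; exact add_le_add_right h c

lemma aux_nsmul_nonneg {a : E} (ha : 0 ≤ a) : ∀ n : ℕ, 0 ≤ n • a := by
  intro n
  induction n with
  | zero => simp
  | succ k ih =>
    rw [succ_nsmul]
    calc (0 : E) = 0 + 0 := by rw [add_zero]
    _ ≤ k • a + a := add_le_add (by exact ih) ha

lemma aux_inf_add_le {x y z : E} (hx : 0 ≤ x) (hy : 0 ≤ y) (hz : 0 ≤ z) :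
    x ⊓ (y + z) ≤ x ⊓ y + x ⊓ z := by
  set w := x ⊓ (y + z) with hw
  have h0 : 0 ≤ x ⊓ y := le_inf hx hy
  have h1 : w - x ⊓ y ≤ x := by
    rw [sub_le_iff_le_add]
    calc w ≤ x := inf_le_left
    _ = x + 0 := by rw [add_zero]
    _ ≤ x + x ⊓ y := add_le_add_right h0 x
  have h2 : w - x ⊓ y ≤ z := by
    rw [sub_le_iff_le_add]
    rw [add_inf]
    refine le_inf ?_ ?_
    · calc w ≤ x := inf_le_left
      _ = 0 + x := by rw [zero_add]
      _ ≤ z + x := aux_add_le_add_right' hz x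
    · calc w ≤ y + z := inf_le_right
      _ = z + y := by rw [add_comm]
  calc w = (w - x ⊓ y) + x ⊓ y := by abel
  _ ≤ x ⊓ z + x ⊓ y := aux_add_le_add_right' (le_inf h1 h2) _
  _ = x ⊓ y + x ⊓ z := by rw [add_comm]

lemma aux_inf_nsmul_eq_zero {a b : E} (ha : 0 ≤ a) (hb : 0 ≤ b) (hab : a ⊓ b = 0) :
    ∀ n : ℕ, a ⊓ (n • b) = 0 := by
  intro n
  induction n with
  | zero => simpa using inf_eq_right.2 ha
  | succ k ih =>
    refine le_antisymm ?_ (le_inf ha (aux_nsmul_nonneg hb _))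
    rw [succ_nsmul]
    calc a ⊓ (k • b + b) ≤ a ⊓ (k • b) + a ⊓ b :=
      aux_inf_add_le ha (aux_nsmul_nonneg hb k) hb
    _ = 0 := by rw [ih, hab, add_zero]

lemma aux_nonneg_of_nsmul_nonneg {n : ℕ} (hn : 0 < n) {a : E} (h : 0 ≤ n • a) : 0 ≤ a := by
  have hd : a⁻ ⊓ (n • a⁺) = 0 :=
    aux_inf_nsmul_eq_zero (negPart_nonneg a) (posPart_nonneg a)
      (by rw [inf_comm]; exact posPart_inf_negPart_eq_zero a) n
  have h2 : n • a⁻ ≤ n • a⁺ := by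
    have : (0 : E) ≤ n • a⁺ - n • a⁻ := by
      calc (0 : E) ≤ n • a := h
      _ = n • (a⁺ - a⁻) := by rw [posPart_sub_negPart]
      _ = n • a⁺ - n • a⁻ := nsmul_sub _ _ _
    exact sub_nonneg.1 this
  have h3 : a⁻ ≤ n • a⁻ := by
    obtain ⟨k, rfl⟩ := Nat.exists_eq_succ_of_ne_zero hn.ne'
    rw [succ_nsmul]
    calc a⁻ = 0 + a⁻ := by rw [zero_add]
    _ ≤ k • a⁻ + a⁻ := aux_add_le_add_right' (aux_nsmul_nonneg (negPart_nonneg a) k) _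
  have h4 : a⁻ ≤ n • a⁺ := le_trans h3 h2
  have h5 : a⁻ = 0 := by
    rw [← hd]; exact (inf_eq_left.2 h4).symm
  rw [← negPart_eq_zero]; exact h5

section ModuleE
variable [Module ℝ E]

lemma aux_smul_le_iff {n : ℕ} (hn : 0 < n) {a b : E} : (n : ℝ) • a ≤ (n : ℝ) • b ↔ a ≤ b := by
  constructor
  · intro h
    have h' : 0 ≤ n • (b - a) := by
      rw [← Nat.cast_smul_eq_nsmul ℝ, smul_sub]
      exact sub_nonneg.2 h
    exact sub_nonneg.1 (aux_nonneg_of_nsmul_nonneg hn h')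
  · intro h
    have h' : (0 : E) ≤ n • (b - a) := aux_nsmul_nonneg (sub_nonneg.2 h) n
    rw [← Nat.cast_smul_eq_nsmul ℝ, smul_sub] at h'
    exact sub_nonneg.1 h'

lemma aux_abs_smul {n : ℕ} (hn : 0 < n) (x : E) : |(n : ℝ) • x| = (n : ℝ) • |x| := by
  have hn' : (n : ℝ) ≠ 0 := Nat.cast_ne_zero.2 hn.ne'
  apply le_antisymm
  · refine abs_le'.2 ⟨(aux_smul_le_iff hn).2 (le_abs_self x), ?_⟩
    rw [← smul_neg]
    exact (aux_smul_le_iff hn).2 (neg_le_abs x)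
  · have h1 : x ≤ (n : ℝ)⁻¹ • |(n : ℝ) • x| := by
      rw [← aux_smul_le_iff hn (a := x), smul_inv_smul₀ hn']
      exact le_abs_self _
    have h2 : -x ≤ (n : ℝ)⁻¹ • |(n : ℝ) • x| := by
      rw [← aux_smul_le_iff hn (a := -x), smul_inv_smul₀ hn', smul_neg]
      exact neg_le_abs _
    have h3 : |x| ≤ (n : ℝ)⁻¹ • |(n : ℝ) • x| := abs_le'.2 ⟨h1, h2⟩
    calc (n : ℝ) • |x| ≤ (n : ℝ) • ((n : ℝ)⁻¹ • |(n : ℝ) • x|) := (aux_smul_le_iff hn).2 h3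
    _ = |(n : ℝ) • x| := smul_inv_smul₀ hn' _

lemma aux_solid_smul {n : ℕ} (hn : 0 < n) {V : Set E} (hV : SolidSet V) :
    SolidSet ((n : ℝ) • V) := by
  rintro x y hxy ⟨v, hv, rfl⟩
  have hn' : (n : ℝ) ≠ 0 := Nat.cast_ne_zero.2 hn.ne'
  refine ⟨(n : ℝ)⁻¹ • x, hV _ v ?_ hv, smul_inv_smul₀ hn' x⟩
  rw [← aux_smul_le_iff hn, ← aux_abs_smul hn, ← aux_abs_smul hn, smul_inv_smul₀ hn']
  exact hxy

section TopE
variable [TopologicalSpace E] [IsTopologicalAddGroup E] [ContinuousSMul ℝ E]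

lemma aux_bounded_of_dominated (hE : IsLocallySolid E) {B B' : Set E}
    (hB : IsVonNBounded ℝ B) (h : ∀ y ∈ B', ∃ b ∈ B, |y| ≤ |b|) :
    IsVonNBounded ℝ B' := by
  intro U hU
  have hM_mem : balancedCore ℝ U ∈ 𝓝 (0 : E) := balancedCore_mem_nhds_zero hU
  obtain ⟨V, hVmem, hVsolid, hVsub⟩ := hE _ hM_mem
  obtain ⟨r, hr⟩ := absorbs_iff_norm.1 (hB hVmem)
  obtain ⟨m, hm⟩ := exists_nat_ge r
  set n : ℕ := m + 1 with hn_def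
  have hn : 0 < n := Nat.succ_pos m
  have hrn : r ≤ (n : ℝ) := by
    calc r ≤ (m : ℝ) := hm
    _ ≤ (n : ℝ) := by exact_mod_cast Nat.le_succ m
  have hBn : B ⊆ (n : ℝ) • V := hr _ (by rw [Real.norm_natCast]; exact hrn)
  have hB'n : B' ⊆ (n : ℝ) • V := by
    intro y hy
    obtain ⟨b, hb, hle⟩ := h y hy
    exact aux_solid_smul hn hVsolid y b hle (hBn hb)
  rw [absorbs_iff_norm]
  refine ⟨(n : ℝ), fun c hc => ?_⟩
  have hn1 : (1 : ℝ) ≤ (n : ℝ) := by exact_mod_cast hn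
  have hc1 : (1 : ℝ) ≤ ‖c‖ := le_trans hn1 hc
  have hc0 : c ≠ 0 := by
    intro h0; rw [h0, norm_zero] at hc1; linarith
  intro y hy
  obtain ⟨v, hv, rfl⟩ := hB'n hy
  have hnorm : ‖c⁻¹ * (n : ℝ)‖ ≤ 1 := by
    rw [norm_mul, norm_inv, Real.norm_natCast]
    have hcpos : 0 < ‖c‖ := lt_of_lt_of_le one_pos hc1
    rw [inv_mul_le_iff₀ hcpos, mul_one]
    exact hc
  refine ⟨(c⁻¹ * (n : ℝ)) • v, ?_, ?_⟩
  · exact balancedCore_subset U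
      (balancedCore_balanced U (c⁻¹ * (n : ℝ)) hnorm
        (Set.smul_mem_smul_set (hVsub hv)))
  · show c • ((c⁻¹ * (n : ℝ)) • v) = (n : ℝ) • v
    rw [smul_smul, ← mul_assoc, mul_inv_cancel₀ hc0, one_mul]

end TopE

end ModuleE

end AuxLemmas

theorem stmt10 (hV : IsLocallySolid V) (hW : IsLocallySolid W)
    (hoc : OrderComplete W) (hFatou : HasFatouProperty W)
    (T S : V →ₗ[ℝ] W) (hpos : ∀ x : V, 0 ≤ x → 0 ≤ T x ∧ T x ≤ S x) :
    (Continuous S → Continuous T) ∧ (NbBoundedOp S → NbBoundedOp T) ∧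
      (BbBoundedOp S → BbBoundedOp T) := by
  have key : ∀ x : V, |T x| ≤ S |x| ∧ 0 ≤ S |x| := by
    intro x
    have h1 := hpos x⁺ (posPart_nonneg x)
    have h2 := hpos x⁻ (negPart_nonneg x)
    have hTabs : T |x| = T x⁺ + T x⁻ := by rw [← posPart_add_negPart x, map_add]
    have hT : T x = T x⁺ - T x⁻ := by rw [← map_sub, posPart_sub_negPart]
    have hTle : |T x| ≤ T |x| := by
      refine abs_le'.2 ⟨?_, ?_⟩
      · rw [hT, hTabs, sub_eq_add_neg]
        exact add_le_add_right (neg_le_self h2.1) _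
      · rw [hT, hTabs, neg_sub, sub_eq_add_neg, add_comm (T x⁺) (T x⁻)]
        exact add_le_add_right (neg_le_self h1.1) _
    have hST : T |x| ≤ S |x| := (hpos |x| (abs_nonneg x)).2
    exact ⟨hTle.trans hST, le_trans (hpos |x| (abs_nonneg x)).1 hST⟩
  have keyabs : ∀ x : V, |T x| ≤ |S (|x|)| := by
    intro x
    rw [abs_of_nonneg (key x).2]
    exact (key x).1
  refine ⟨?_, ?_, ?_⟩
  · -- continuity
    intro hS
    refine continuous_of_continuousAt_zero T ?_
    rw [ContinuousAt, map_zero, tendsto_def]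
    intro U hU
    obtain ⟨V', hV'mem, hV'solid, hV'sub⟩ := hW U hU
    have hpre : S ⁻¹' V' ∈ 𝓝 (0 : V) := by
      have hSc : ContinuousAt S 0 := hS.continuousAt
      rw [ContinuousAt, map_zero, tendsto_def] at hSc
      exact hSc V' hV'mem
    obtain ⟨N, hNmem, hNsolid, hNsub⟩ := hV _ hpre
    refine mem_of_superset hNmem (fun x hx => ?_)
    have habs : |x| ∈ N := hNsolid |x| x (by rw [abs_abs]) hx
    have hSV' : S |x| ∈ V' := hNsub habs
    exact hV'sub (hV'solid (T x) (S |x|) (keyabs x) hSV')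
  · -- nb-bounded
    rintro ⟨U₀, hU₀, hSb⟩
    obtain ⟨W₀, hW₀mem, hW₀solid, hW₀sub⟩ := hV U₀ hU₀
    refine ⟨W₀, hW₀mem, ?_⟩
    refine aux_bounded_of_dominated hW hSb ?_
    rintro y ⟨x, hx, rfl⟩
    exact ⟨S (|x|), ⟨|x|, hW₀sub (hW₀solid (|x|) x (by rw [abs_abs]) hx), rfl⟩, keyabs x⟩
  · -- bb-bounded
    intro hS B hB
    have hAbsB : IsVonNBounded ℝ ((fun x => |x|) '' B) := by
      refine aux_bounded_of_dominated hV hB ?_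
      rintro y ⟨x, hx, rfl⟩
      exact ⟨x, hx, by rw [abs_abs]⟩
    refine aux_bounded_of_dominated hW (hS _ hAbsB) ?_
    rintro y ⟨x, hx, rfl⟩
    exact ⟨S (|x|), ⟨|x|, ⟨x, hx, rfl⟩, rfl⟩, keyabs x⟩

end Operators
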